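/- Let ε ≥ 0, A, and μ be real numbers with D := 1 + (√3 − 1)ε + (2 − √3)ε² ≠ 0, and define e₁ := A(1 + ε(√3 − 1)/2)/D and e₂ := A·ε(1 − √3)/2/D. Then the sequence b_k := μ + e₁·sin((k−5)π/6) + e₂·cos((k−5)π/6) satisfies b_{k+2} + ε·b_{k+1} − ε·b_k = μ + A·sin((k+2−5)π/6) for all k ∈ ℕ. -/

import Mathlib

/-- The sinusoid b_k = μ + e₁ sin((k−5)π/6) + e₂ cos((k−5)π/6), with the stated
coefficients, is a particular solution of the price recurrence with sinusoidal demand. -/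
theorem stmt_5 (ε A μ : ℝ) (hε : 0 ≤ ε)
    (D e₁ e₂ : ℝ)
    (hD : D = 1 + (Real.sqrt 3 - 1) * ε + (2 - Real.sqrt 3) * ε ^ 2)
    (hD0 : D ≠ 0)
    (he₁ : e₁ = A * (1 + ε * (Real.sqrt 3 - 1) / 2) / D)
    (he₂ : e₂ = A * ε * (1 - Real.sqrt 3) / 2 / D)
    (b : ℕ → ℝ)
    (hb : ∀ k : ℕ, b k = μ + e₁ * Real.sin (((k : ℝ) - 5) * Real.pi / 6)
        + e₂ * Real.cos (((k : ℝ) - 5) * Real.pi / 6)) :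
    ∀ k : ℕ, b (k + 2) + ε * b (k + 1) - ε * b k
      = μ + A * Real.sin (((k : ℝ) + 2 - 5) * Real.pi / 6) := by
  intro k
  have h3 : Real.sqrt 3 ^ 2 = 3 := Real.sq_sqrt (by norm_num)
  set x : ℝ := ((k : ℝ) - 5) * Real.pi / 6 with hx
  have a2 : ((k : ℝ) + 2 - 5) * Real.pi / 6 = x + Real.pi / 3 := by rw [hx]; ring
  have a1 : ((k : ℝ) + 1 - 5) * Real.pi / 6 = x + Real.pi / 6 := by rw [hx]; ring
  rw [hb, hb, hb]
  push_cast
  rw [a2, a1, Real.sin_add, Real.cos_add, Real.sin_add, Real.cos_add,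
    Real.sin_pi_div_six, Real.cos_pi_div_six, Real.sin_pi_div_three,
    Real.cos_pi_div_three, he₁, he₂, ← hx]
  rw [hD] at hD0 ⊢
  have hD0' : 1 + ε * (Real.sqrt 3 - 1) + ε ^ 2 * (2 - Real.sqrt 3) ≠ 0 := by
    convert hD0 using 1; ring
  field_simp
  linear_combination A * (Real.sin x * (ε + ε^2) + Real.cos x * (ε^2 - ε)) * h3
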